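/- Let ũ(x) = a·ln(1/|x|) + ((a-1)/2)(|x|²-1) on ℝ⁴∖{0} with a > 1. Then the boundary integral ∫_{∂B₁(0)} [ ((x,ν)/2)(Δũ)² + Δũ ∂_ν(x·∇ũ) - (x·∇ũ) ∂_ν(Δũ) ] dσ equals -4π²a², where ν is the outer unit normal and Δ = -∑∂ᵢᵢ. -/

import Mathlib

open MeasureTheory Metric Real Filter Topology
open scoped RealInnerProductSpace

noncomputable section

/-- The geometer's Laplacian `Δ = -∑ ∂ᵢᵢ` on `ℝ⁴`. -/
def lap (u : EuclideanSpace ℝ (Fin 4) → ℝ) (x : EuclideanSpace ℝ (Fin 4)) : ℝ :=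
  -∑ i : Fin 4, iteratedFDeriv ℝ 2 u x ![EuclideanSpace.single i 1, EuclideanSpace.single i 1]

/-- The bi-Laplacian `Δ²`. -/
def biLap (u : EuclideanSpace ℝ (Fin 4) → ℝ) (x : EuclideanSpace ℝ (Fin 4)) : ℝ :=
  lap (lap u) x

abbrev E4 := EuclideanSpace ℝ (Fin 4)

lemma inner_self_hasFDerivAt (y : E4) :
    HasFDerivAt (fun z : E4 => ⟪z, z⟫) ((2:ℝ) • (innerSL ℝ y)) y := by
  have h := (hasFDerivAt_id y).inner ℝ (hasFDerivAt_id y)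
  refine h.congr_fderiv ?_
  ext w
  simp [fderivInnerCLM_apply, real_inner_comm, mul_comm]
  ring

lemma radial_hasFDerivAt (ψ : ℝ → ℝ) {d : ℝ} (y : E4) (h : HasDerivAt ψ d ⟪y, y⟫) :
    HasFDerivAt (fun z : E4 => ψ ⟪z, z⟫) (d • ((2:ℝ) • innerSL ℝ y)) y :=
  HasDerivAt.comp_hasFDerivAt (f := fun z : E4 => ⟪z, z⟫) y h (inner_self_hasFDerivAt y)

lemma radial_hasGradientAt (ψ : ℝ → ℝ) {d : ℝ} (y : E4) (h : HasDerivAt ψ d ⟪y, y⟫) :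
    HasGradientAt (fun z : E4 => ψ ⟪z, z⟫) ((2 * d) • y) y := by
  have h2 := radial_hasFDerivAt ψ y h
  rw [hasGradientAt_iff_hasFDerivAt]
  refine h2.congr_fderiv ?_
  ext w
  simp [InnerProductSpace.toDual_apply_apply, real_inner_smul_left]
  ring

lemma u_eq (a : ℝ) (u : E4 → ℝ)
    (hu : ∀ x : E4, u x = a * Real.log (1 / ‖x‖) + (a - 1) / 2 * (‖x‖ ^ 2 - 1)) :
    u = fun z : E4 => -(a/2) * Real.log ⟪z, z⟫ + (a-1)/2 * (⟪z, z⟫ - 1) := by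
  funext z
  rw [hu z, real_inner_self_eq_norm_sq, one_div, Real.log_inv, Real.log_pow]
  push_cast
  ring

lemma grad_u (a : ℝ) (u : E4 → ℝ)
    (hu : ∀ x : E4, u x = a * Real.log (1 / ‖x‖) + (a - 1) / 2 * (‖x‖ ^ 2 - 1))
    {y : E4} (hy : y ≠ 0) :
    HasGradientAt u (((a-1) - a * ⟪y, y⟫⁻¹) • y) y := by
  have hny : ‖y‖ ≠ 0 := norm_ne_zero_iff.mpr hy
  have hs : (0:ℝ) < ⟪y, y⟫ := by rw [real_inner_self_eq_norm_sq]; positivity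
  rw [u_eq a u hu]
  have h : HasDerivAt (fun t : ℝ => -(a/2) * Real.log t + (a-1)/2 * (t - 1))
      (-(a/2) * (⟪y, y⟫)⁻¹ + (a-1)/2 * 1) ⟪y, y⟫ :=
    ((Real.hasDerivAt_log hs.ne').const_mul _).add
      (((hasDerivAt_id _).sub_const 1).const_mul _)
  have := radial_hasGradientAt _ y h
  convert this using 2
  ring

lemma fderiv_u (a : ℝ) (u : E4 → ℝ)
    (hu : ∀ x : E4, u x = a * Real.log (1 / ‖x‖) + (a - 1) / 2 * (‖x‖ ^ 2 - 1))
    {y : E4} (hy : y ≠ 0) :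
    fderiv ℝ u y = ((a-1) - a * ⟪y, y⟫⁻¹) • innerSL ℝ y := by
  rw [(grad_u a u hu hy).hasFDerivAt.fderiv]
  ext w
  simp [InnerProductSpace.toDual_apply_apply, real_inner_smul_left]

lemma lap_u (a : ℝ) (u : E4 → ℝ)
    (hu : ∀ x : E4, u x = a * Real.log (1 / ‖x‖) + (a - 1) / 2 * (‖x‖ ^ 2 - 1))
    {y : E4} (hy : y ≠ 0) :
    lap u y = 2*a*⟪y, y⟫⁻¹ - 4*(a-1) := by
  have hny : ‖y‖ ≠ 0 := norm_ne_zero_iff.mpr hy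
  have hs : (0:ℝ) < ⟪y, y⟫ := by rw [real_inner_self_eq_norm_sq]; positivity
  have hmem : {(0:E4)}ᶜ ∈ 𝓝 y := isOpen_compl_singleton.mem_nhds hy
  have hev : fderiv ℝ u =ᶠ[𝓝 y] fun z => ((a-1) - a * ⟪z, z⟫⁻¹) • innerSL ℝ z :=
    Filter.eventuallyEq_of_mem hmem (fun z hz => fderiv_u a u hu hz)
  have hd : HasDerivAt (fun t : ℝ => (a-1) - a * t⁻¹) (a * (⟪y, y⟫^2)⁻¹) ⟪y, y⟫ := by
    have h2 := (hasDerivAt_const ⟪y, y⟫ (a-1)).sub ((hasDerivAt_inv hs.ne').const_mul a)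
    refine h2.congr_deriv ?_; ring
  have hc := radial_hasFDerivAt _ y hd
  have hlin : HasFDerivAt (fun z : E4 => innerSL ℝ z) (innerSL ℝ (E := E4)) y :=
    (innerSL ℝ (E := E4)).hasFDerivAt
  have hG := hc.smul hlin
  have key : ∀ i : Fin 4,
      fderiv ℝ (fderiv ℝ u) y (EuclideanSpace.single i 1) (EuclideanSpace.single i 1)
        = ((a-1) - a * ⟪y, y⟫⁻¹) + a * (⟪y, y⟫^2)⁻¹ * 2 * (y i * y i) := by
    intro i
    rw [hev.fderiv_eq]
    rw [show fderiv ℝ (fun z : E4 => ((a-1) - a * ⟪z, z⟫⁻¹) • innerSL ℝ z) y = _ from hG.fderiv]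
    simp [EuclideanSpace.inner_single_left, EuclideanSpace.inner_single_right,
      real_inner_smul_left, EuclideanSpace.single_apply, innerSL_apply_apply]
    rw [innerSL_apply_apply]; simp
    ring
  have hsum : ∑ i : Fin 4, y i * y i = ⟪y, y⟫ := by
    rw [real_inner_self_eq_norm_sq, EuclideanSpace.norm_sq_eq]; simp [sq]
  unfold lap
  simp only [iteratedFDeriv_two_apply, Matrix.cons_val_zero, Matrix.cons_val_one, Matrix.head_cons]
  rw [Finset.sum_congr rfl (fun i _ => key i), Finset.sum_add_distrib, Finset.sum_const]
  rw [← Finset.mul_sum, hsum]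
  generalize hgen : (⟪y, y⟫ : ℝ) = s at hs ⊢
  have hcard : (Finset.univ : Finset (Fin 4)).card = 4 := by simp
  rw [hcard]
  have hs0 : s ≠ 0 := hs.ne'
  rw [nsmul_eq_mul]
  field_simp
  ring

lemma grad_lap (a : ℝ) (u : E4 → ℝ)
    (hu : ∀ x : E4, u x = a * Real.log (1 / ‖x‖) + (a - 1) / 2 * (‖x‖ ^ 2 - 1))
    {x : E4} (hx : x ≠ 0) :
    gradient (lap u) x = (2 * (2 * a * -(⟪x, x⟫^2)⁻¹)) • x := by
  have hnx : ‖x‖ ≠ 0 := norm_ne_zero_iff.mpr hx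
  have hs : (0:ℝ) < ⟪x, x⟫ := by rw [real_inner_self_eq_norm_sq]; positivity
  have hmem : {(0:E4)}ᶜ ∈ 𝓝 x := isOpen_compl_singleton.mem_nhds hx
  have hev : lap u =ᶠ[𝓝 x] fun z => 2*a*⟪z, z⟫⁻¹ - 4*(a-1) :=
    Filter.eventuallyEq_of_mem hmem (fun z hz => lap_u a u hu hz)
  rw [hev.gradient_eq]
  have hd : HasDerivAt (fun t : ℝ => 2*a*t⁻¹ - 4*(a-1)) (2 * a * -(⟪x, x⟫^2)⁻¹) ⟪x, x⟫ := by
    exact (((hasDerivAt_inv hs.ne').const_mul (2*a))).sub_const (4*(a-1))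
  exact (radial_hasGradientAt _ x hd).gradient

lemma grad_v (a : ℝ) (u : E4 → ℝ)
    (hu : ∀ x : E4, u x = a * Real.log (1 / ‖x‖) + (a - 1) / 2 * (‖x‖ ^ 2 - 1))
    {x : E4} (hx : x ≠ 0) :
    gradient (fun y : E4 => ⟪y, gradient u y⟫) x = (2 * (a-1)) • x := by
  have hmem : {(0:E4)}ᶜ ∈ 𝓝 x := isOpen_compl_singleton.mem_nhds hx
  have hev : (fun y : E4 => ⟪y, gradient u y⟫) =ᶠ[𝓝 x] fun z => (a-1)*⟪z, z⟫ - a := by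
    refine Filter.eventuallyEq_of_mem hmem (fun z hz => ?_)
    have hz : z ≠ 0 := hz
    have hnz : ‖z‖ ≠ 0 := norm_ne_zero_iff.mpr hz
    have hs : (0:ℝ) < ⟪z, z⟫ := by rw [real_inner_self_eq_norm_sq]; positivity
    rw [(grad_u a u hu hz).gradient, real_inner_smul_right]
    generalize hgen : (⟪z, z⟫ : ℝ) = s at hs ⊢
    field_simp
  rw [hev.gradient_eq]
  have hd : HasDerivAt (fun t : ℝ => (a-1)*t - a) (a-1) ⟪x, x⟫ := by
    simpa using ((hasDerivAt_id ⟪x, x⟫).const_mul (a-1)).sub_const a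
  exact (radial_hasGradientAt _ x hd).gradient

lemma sphere_measure_univ :
    ((volume : Measure E4).toSphere Set.univ).toReal = 2 * Real.pi ^ 2 := by
  have h1 : (volume : Measure E4) (ball 0 1) = ENNReal.ofReal (Real.pi ^ 2 / 2) := by
    rw [EuclideanSpace.volume_ball]
    have hc : Fintype.card (Fin 4) = 4 := by simp
    rw [hc]
    have h2 : (Real.sqrt Real.pi) ^ 4 = Real.pi ^ 2 := by
      rw [show 4 = 2 * 2 from rfl, pow_mul, Real.sq_sqrt Real.pi_pos.le]
    have h3 : ((4:ℕ) : ℝ) / 2 + 1 = ((2:ℕ) : ℝ) + 1 := by norm_num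
    rw [h2, h3, Real.Gamma_nat_eq_factorial]
    norm_num
  rw [Measure.toSphere_apply_univ, h1]
  have hd : (Module.finrank ℝ E4) = 4 := by simp [finrank_euclideanSpace]
  rw [hd]
  rw [ENNReal.toReal_mul, ENNReal.toReal_ofReal (by positivity)]
  norm_num
  ring

theorem stmt10 (a : ℝ) (ha : 1 < a)
    (u : EuclideanSpace ℝ (Fin 4) → ℝ)
    (hu : ∀ x : EuclideanSpace ℝ (Fin 4),
      u x = a * Real.log (1 / ‖x‖) + (a - 1) / 2 * (‖x‖ ^ 2 - 1)) :
    ∫ x : (Metric.sphere (0 : EuclideanSpace ℝ (Fin 4)) 1),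
        (⟪(x : EuclideanSpace ℝ (Fin 4)), (x : EuclideanSpace ℝ (Fin 4))⟫ / 2
            * (lap u x) ^ 2
          + lap u x * ⟪(x : EuclideanSpace ℝ (Fin 4)),
              gradient (fun y : EuclideanSpace ℝ (Fin 4) => ⟪y, gradient u y⟫) x⟫
          - ⟪(x : EuclideanSpace ℝ (Fin 4)), gradient u x⟫
            * ⟪(x : EuclideanSpace ℝ (Fin 4)), gradient (lap u) x⟫)
        ∂((volume : Measure (EuclideanSpace ℝ (Fin 4))).toSphere)
      = -4 * Real.pi ^ 2 * a ^ 2 := by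
  have hint : (fun x : (Metric.sphere (0 : EuclideanSpace ℝ (Fin 4)) 1) =>
        (⟪(x : EuclideanSpace ℝ (Fin 4)), (x : EuclideanSpace ℝ (Fin 4))⟫ / 2
            * (lap u x) ^ 2
          + lap u x * ⟪(x : EuclideanSpace ℝ (Fin 4)),
              gradient (fun y : EuclideanSpace ℝ (Fin 4) => ⟪y, gradient u y⟫) x⟫
          - ⟪(x : EuclideanSpace ℝ (Fin 4)), gradient u x⟫
            * ⟪(x : EuclideanSpace ℝ (Fin 4)), gradient (lap u) x⟫))
      = fun _ => (-2 * a ^ 2 : ℝ) := by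
    funext x
    have hxn : ‖(x : E4)‖ = 1 := by
      simpa using mem_sphere_zero_iff_norm.mp x.2
    have hx0 : (x : E4) ≠ 0 := by
      intro h; rw [h] at hxn; simp at hxn
    have hxx : ⟪(x : E4), (x : E4)⟫ = 1 := by
      rw [real_inner_self_eq_norm_sq, hxn]; norm_num
    rw [lap_u a u hu hx0, grad_v a u hu hx0, grad_lap a u hu hx0,
      (grad_u a u hu hx0).gradient]
    rw [real_inner_smul_right, real_inner_smul_right, real_inner_smul_right, hxx]
    ring
  rw [hint, integral_const, measureReal_def, sphere_measure_univ, smul_eq_mul]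
  ring
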